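/- The one-relator group G = ⟨a, b | a^{b²} = a·a^{3b}⟩ is isomorphic to the semidirect product F ⋊ ℤ, where F = F(x,y) is the free group on two generators and the generator of ℤ acts on F by the automorphism φ with φ(x) = y and φ(y) = x·y³; under this isomorphism a corresponds to x ∈ F and b to the generator of ℤ. -/

import Mathlib

namespace OneRelatorLCS

/-- The relator `(b⁻²ab²)⁻¹ · a · (b⁻¹a³b)` in the free group on `a = of 0`, `b = of 1`,
expressing the relation `a^{b²} = a·a^{3b}` (with `x^y = y⁻¹xy`). -/
def rel : FreeGroup (Fin 2) :=
  ((FreeGroup.of 1)⁻¹ * (FreeGroup.of 1)⁻¹ * FreeGroup.of 0 * FreeGroup.of 1 * FreeGroup.of 1)⁻¹ *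
    FreeGroup.of 0 *
    ((FreeGroup.of 1)⁻¹ * (FreeGroup.of 0) ^ 3 * FreeGroup.of 1)

/-- The one-relator group `G = ⟨a, b | a^{b²} = a·a^{3b}⟩`. -/
abbrev G : Type := PresentedGroup ({rel} : Set (FreeGroup (Fin 2)))

def a : G := PresentedGroup.of 0
def b : G := PresentedGroup.of 1

/-- The endomorphism `φ` of `F(x,y)`: `x ↦ y`, `y ↦ x·y³` (here `x = of 0`,
`y = of 1`). -/
def psi : FreeGroup (Fin 2) →* FreeGroup (Fin 2) :=
  FreeGroup.lift fun i => if i = 0 then FreeGroup.of 1 else FreeGroup.of 0 * (FreeGroup.of 1) ^ 3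

/-- The inverse of `φ`: `x ↦ y·x⁻³`, `y ↦ x`. -/
def chi : FreeGroup (Fin 2) →* FreeGroup (Fin 2) :=
  FreeGroup.lift fun i =>
    if i = 0 then FreeGroup.of 1 * ((FreeGroup.of 0) ^ 3)⁻¹ else FreeGroup.of 0

lemma chi_comp_psi : chi.comp psi = MonoidHom.id _ := by
  apply FreeGroup.ext_hom; intro i; fin_cases i <;> simp [psi, chi]

lemma psi_comp_chi : psi.comp chi = MonoidHom.id _ := by
  apply FreeGroup.ext_hom; intro i; fin_cases i <;> simp [psi, chi]

/-- The automorphism `φ` of the free group `F(x,y)` with `φ(x) = y`, `φ(y) = xy³`. -/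
def phiAut : MulAut (FreeGroup (Fin 2)) :=
  MonoidHom.toMulEquiv psi chi chi_comp_psi psi_comp_chi

/-- The action of `ℤ` on `F(x,y)` in which the generator `1 ∈ ℤ` acts by `φ`. -/
def theta : Multiplicative ℤ →* MulAut (FreeGroup (Fin 2)) :=
  zpowersHom _ phiAut

/-- The semidirect product `F(x,y) ⋊ ℤ` for this action. -/
abbrev Phi : Type := SemidirectProduct (FreeGroup (Fin 2)) (Multiplicative ℤ) theta

open SemidirectProduct Multiplicative

lemma phiAut_apply (n : FreeGroup (Fin 2)) : phiAut n = psi n := rfl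

lemma phiAut_inv_apply (n : FreeGroup (Fin 2)) : phiAut⁻¹ n = chi n := rfl

/-- The generators' images in `Phi`. -/
def fPhi : Fin 2 → Phi := fun i =>
  if i = 0 then SemidirectProduct.inl (FreeGroup.of 0)
  else SemidirectProduct.inr (Multiplicative.ofAdd (-1 : ℤ))

lemma ofAdd_neg_one_inv : (ofAdd (-1 : ℤ))⁻¹ = ofAdd (1 : ℤ) := by
  rw [← ofAdd_neg]; norm_num

lemma hBinv : (inr (ofAdd (-1 : ℤ)) : Phi)⁻¹ = inr (ofAdd (1 : ℤ)) := by
  rw [← map_inv, ofAdd_neg_one_inv]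

lemma hconj (n : FreeGroup (Fin 2)) :
    (inr (ofAdd (1 : ℤ)) : Phi) * inl n * inr (ofAdd (-1 : ℤ)) = inl (psi n) := by
  have h := SemidirectProduct.inl_aut (φ := theta) (ofAdd (1 : ℤ)) n
  have h2 : (ofAdd (1 : ℤ))⁻¹ = ofAdd (-1 : ℤ) := by rw [← ofAdd_neg]
  rw [h2] at h
  rw [← h]
  rfl

lemma lift_fPhi_rel : FreeGroup.lift fPhi rel = 1 := by
  have hA : FreeGroup.lift fPhi (FreeGroup.of 0) = inl (FreeGroup.of 0) := by simp [fPhi]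
  have hB : FreeGroup.lift fPhi (FreeGroup.of 1) = inr (ofAdd (-1 : ℤ)) := by simp [fPhi]
  have hr : rel = ((FreeGroup.of 1)⁻¹ * ((FreeGroup.of 1)⁻¹ * FreeGroup.of 0 * FreeGroup.of 1) *
      FreeGroup.of 1)⁻¹ * FreeGroup.of 0 *
      ((FreeGroup.of 1)⁻¹ * (FreeGroup.of 0) ^ 3 * FreeGroup.of 1) := by
    unfold rel; group
  rw [hr]
  simp only [map_mul, map_inv, map_pow, hA, hB, hBinv]
  rw [show (inl (FreeGroup.of 0) : Phi) ^ 3 = inl ((FreeGroup.of 0) ^ 3) from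
    (map_pow _ _ _).symm]
  rw [hconj, hconj, hconj]
  rw [← map_inv, ← map_mul, ← map_mul]
  have hw : (psi (psi (FreeGroup.of 0)))⁻¹ * FreeGroup.of 0 * psi ((FreeGroup.of 0) ^ 3) = 1 := by
    simp only [psi, map_pow, FreeGroup.lift_apply_of]
    norm_num
  rw [hw, map_one]

/-- The hom `G →* Phi`. -/
def fwd : G →* Phi :=
  PresentedGroup.toGroup (f := fPhi) (by
    rintro r (rfl : r = rel); exact lift_fPhi_rel)

/-- Generator images for the inverse. -/
def ff : Fin 2 → G := fun i => if i = 0 then a else b⁻¹ * a * b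

def fN : FreeGroup (Fin 2) →* G := FreeGroup.lift ff

def fZ : Multiplicative ℤ →* G := zpowersHom G b⁻¹

lemma rel_key {H : Type*} [Group H] (x y : H)
    (hxy : (y⁻¹ * y⁻¹ * x * y * y)⁻¹ * x * (y⁻¹ * x ^ 3 * y) = 1) :
    x * (y⁻¹ * x ^ 3 * y) = y⁻¹ * y⁻¹ * x * (y * y) := by
  calc x * (y⁻¹ * x ^ 3 * y)
      = (y⁻¹ * y⁻¹ * x * y * y) * ((y⁻¹ * y⁻¹ * x * y * y)⁻¹ * x * (y⁻¹ * x ^ 3 * y)) := by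
        group
    _ = (y⁻¹ * y⁻¹ * x * y * y) * 1 := by rw [hxy]
    _ = y⁻¹ * y⁻¹ * x * (y * y) := by group

lemma rel_holds : a * (b⁻¹ * a ^ 3 * b) = b⁻¹ * b⁻¹ * a * (b * b) := by
  have hmem : rel ∈ Subgroup.normalClosure ({rel} : Set (FreeGroup (Fin 2))) :=
    Subgroup.subset_normalClosure rfl
  have h : PresentedGroup.mk {rel} rel = 1 := (QuotientGroup.eq_one_iff rel).2 hmem
  simp only [rel, map_mul, map_inv, map_pow] at h
  exact rel_key a b h

lemma fN_of0 : fN (FreeGroup.of 0) = a := by simp [fN, ff]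

lemma fN_of1 : fN (FreeGroup.of 1) = b⁻¹ * a * b := by simp [fN, ff]

lemma fN_psi_of0 : fN (psi (FreeGroup.of 0)) = b⁻¹ * fN (FreeGroup.of 0) * b := by
  have h1 : psi (FreeGroup.of 0) = FreeGroup.of 1 := by simp [psi]
  rw [h1, fN_of1, fN_of0]

lemma fN_psi_of1 : fN (psi (FreeGroup.of 1)) = b⁻¹ * fN (FreeGroup.of 1) * b := by
  have h1 : psi (FreeGroup.of 1) = FreeGroup.of 0 * (FreeGroup.of 1) ^ 3 := by simp [psi]
  rw [h1, map_mul, map_pow, fN_of0, fN_of1]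
  have h3 : (b⁻¹ * a * b) ^ 3 = b⁻¹ * a ^ 3 * b := by
    rw [show (a : G) ^ 3 = a * a * a from by rw [pow_succ, pow_succ, pow_one],
      pow_succ, pow_succ, pow_one]
    group
  rw [h3]
  calc a * (b⁻¹ * a ^ 3 * b) = b⁻¹ * b⁻¹ * a * (b * b) := rel_holds
    _ = b⁻¹ * (b⁻¹ * a * b) * b := by group

lemma fN_psi (n : FreeGroup (Fin 2)) : fN (psi n) = b⁻¹ * fN n * b := by
  have key : fN.comp psi = (MulAut.conj b⁻¹).toMonoidHom.comp fN := by
    apply FreeGroup.ext_hom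
    intro i
    simp only [MonoidHom.comp_apply, MulEquiv.coe_toMonoidHom, MulAut.conj_apply, inv_inv]
    fin_cases i
    · exact fN_psi_of0
    · exact fN_psi_of1
  have h := DFunLike.congr_fun key n
  simp only [MonoidHom.comp_apply, MulEquiv.coe_toMonoidHom, MulAut.conj_apply, inv_inv] at h
  exact h

lemma fN_chi (n : FreeGroup (Fin 2)) : fN (chi n) = b * fN n * b⁻¹ := by
  have h := fN_psi (chi n)
  have h2 : psi (chi n) = n := DFunLike.congr_fun psi_comp_chi n
  rw [h2] at h
  rw [h]; group

lemma key_pow (k : ℤ) (n : FreeGroup (Fin 2)) :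
    fN ((phiAut ^ k) n) = b⁻¹ ^ k * fN n * (b⁻¹ ^ k)⁻¹ := by
  induction k using Int.induction_on generalizing n with
  | zero => simp
  | succ k ih =>
    have e1 : (phiAut ^ ((k : ℤ) + 1)) n = (phiAut ^ (k : ℤ)) (phiAut n) := by
      rw [zpow_add_one]; rfl
    rw [e1, phiAut_apply, ih, fN_psi, zpow_add_one]
    group
  | pred k ih =>
    have e1 : (phiAut ^ (-(k : ℤ) - 1)) n = (phiAut ^ (-(k : ℤ))) (phiAut⁻¹ n) := by
      rw [sub_eq_add_neg, zpow_add, zpow_neg_one]; rfl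
    rw [e1, phiAut_inv_apply, ih, fN_chi, sub_eq_add_neg, zpow_add, zpow_neg_one]
    group

lemma hcomp : ∀ g : Multiplicative ℤ,
    fN.comp (theta g).toMonoidHom = (MulAut.conj (fZ g)).toMonoidHom.comp fN := by
  intro g
  apply MonoidHom.ext
  intro n
  have h1 : theta g = phiAut ^ (toAdd g) := rfl
  have h2 : fZ g = b⁻¹ ^ (toAdd g) := rfl
  simp only [MonoidHom.comp_apply, MulEquiv.coe_toMonoidHom, MulAut.conj_apply, h1, h2]
  rw [key_pow (toAdd g) n]

/-- The hom `Phi →* G`. -/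
def bwd : Phi →* G := SemidirectProduct.lift fN fZ hcomp

lemma fwd_a : fwd a = inl (FreeGroup.of 0) := by
  rw [show fwd a = fPhi 0 from PresentedGroup.toGroup.of _]; rfl

lemma fwd_b : fwd b = inr (ofAdd (-1 : ℤ)) := by
  rw [show fwd b = fPhi 1 from PresentedGroup.toGroup.of _]; rfl

lemma bwd_fwd : bwd.comp fwd = MonoidHom.id G := by
  apply PresentedGroup.ext
  intro i
  fin_cases i
  · show bwd (fwd (PresentedGroup.of 0)) = PresentedGroup.of 0
    rw [show fwd (PresentedGroup.of 0) = fPhi 0 from PresentedGroup.toGroup.of _]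
    rw [show (fPhi 0 : Phi) = inl (FreeGroup.of 0) from rfl]
    rw [show bwd (inl (FreeGroup.of 0)) = fN (FreeGroup.of 0) from lift_inl _ _ _ _]
    rw [fN_of0]; rfl
  · show bwd (fwd (PresentedGroup.of 1)) = PresentedGroup.of 1
    rw [show fwd (PresentedGroup.of 1) = fPhi 1 from PresentedGroup.toGroup.of _]
    rw [show (fPhi 1 : Phi) = inr (ofAdd (-1 : ℤ)) from rfl]
    rw [show bwd (inr (ofAdd (-1 : ℤ))) = fZ (ofAdd (-1 : ℤ)) from lift_inr _ _ _ _]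
    show b⁻¹ ^ (-1 : ℤ) = PresentedGroup.of 1
    rw [zpow_neg_one, inv_inv]; rfl

lemma fwd_bwd : fwd.comp bwd = MonoidHom.id Phi := by
  apply SemidirectProduct.hom_ext
  · apply FreeGroup.ext_hom
    intro i
    fin_cases i
    · show fwd (bwd (inl (FreeGroup.of 0))) = inl (FreeGroup.of 0)
      rw [show bwd (inl (FreeGroup.of 0)) = fN (FreeGroup.of 0) from lift_inl _ _ _ _]
      rw [fN_of0, fwd_a]
    · show fwd (bwd (inl (FreeGroup.of 1))) = inl (FreeGroup.of 1)
      rw [show bwd (inl (FreeGroup.of 1)) = fN (FreeGroup.of 1) from lift_inl _ _ _ _]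
      rw [fN_of1, map_mul, map_mul, map_inv, fwd_a, fwd_b, hBinv, hconj]
      congr 1
  · apply MonoidHom.ext_mint
    show fwd (bwd (inr (ofAdd (1 : ℤ)))) = inr (ofAdd (1 : ℤ))
    rw [show bwd (inr (ofAdd (1 : ℤ))) = fZ (ofAdd (1 : ℤ)) from lift_inr _ _ _ _]
    show fwd (b⁻¹ ^ (1 : ℤ)) = inr (ofAdd (1 : ℤ))
    rw [zpow_one, map_inv, fwd_b, hBinv]

/-- `G = ⟨a, b | a^{b²} = a·a^{3b}⟩` is isomorphic to `F(x,y) ⋊ ℤ`, where the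
generator of `ℤ` acts by the automorphism `φ : x ↦ y, y ↦ xy³`; under the
isomorphism, `a` corresponds to `x ∈ F(x,y)` and `b` to the generator of `ℤ`.

(Since the paper's convention is right conjugation `x^y = y⁻¹xy`, while
Mathlib's semidirect product uses `inr g * inl n * (inr g)⁻¹ = inl (θ g n)`,
the element `b` — whose *right* conjugation action `f ↦ b⁻¹fb` on `F` is `φ` —
corresponds to the generator `ofAdd (-1)` of `ℤ`.) -/

theorem iso_semidirect_free :
    ∃ e : G ≃* Phi,
      e a = SemidirectProduct.inl (FreeGroup.of 0) ∧
      e b = SemidirectProduct.inr (Multiplicative.ofAdd (-1 : ℤ)) := by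
  exact ⟨MonoidHom.toMulEquiv fwd bwd bwd_fwd fwd_bwd, fwd_a, fwd_b⟩

end OneRelatorLCS
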